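/- If H is a spanning subgraph of a graph G, then γ_{[k]R}(G) ≤ γ_{[k]R}(H) for every integer k ≥ 1. -/

import Mathlib

open SimpleGraph Finset
open scoped Classical

/-- Closed neighborhood of a vertex. -/
def closedNbr {V : Type*} (G : SimpleGraph V) (v : V) : Set V :=
  insert v (G.neighborSet v)

/-- `S` is an efficient dominating set: every vertex lies in the closed
neighborhood of exactly one vertex of `S`. -/
def IsEffDomSet {V : Type*} (G : SimpleGraph V) (S : Set V) : Prop :=
  ∀ v : V, ∃! u, u ∈ S ∧ v ∈ closedNbr G u

/-- `S` is a dominating set. -/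
def IsDomSet {V : Type*} (G : SimpleGraph V) (S : Set V) : Prop :=
  ∀ v : V, v ∉ S → ∃ u ∈ S, G.Adj u v

/-- The domination number. -/
noncomputable def domNumber {V : Type*} (G : SimpleGraph V) [Fintype V] : ℕ :=
  sInf {n | ∃ S : Set V, IsDomSet G S ∧ S.ncard = n}

/-- `f` is a `[k]`-Roman dominating function on `G`. -/
noncomputable def IsKRDF {V : Type*} (G : SimpleGraph V) [Fintype V] (k : ℕ) (f : V → ℕ) : Prop :=
  (∀ v, f v ≤ k + 1) ∧
  ∀ v : V, f v < k →
    f v + ∑ u ∈ univ.filter (fun u => G.Adj v u), f u ≥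
      k + (univ.filter (fun u => G.Adj v u ∧ 0 < f u)).card

/-- The `[k]`-Roman domination number. -/
noncomputable def kRoman {V : Type*} (G : SimpleGraph V) [Fintype V] (k : ℕ) : ℕ :=
  sInf {w | ∃ f : V → ℕ, IsKRDF G k f ∧ ∑ v, f v = w}

/-- `S` is a packing: closed neighborhoods of vertices in `S` are pairwise disjoint. -/
def IsPacking {V : Type*} (G : SimpleGraph V) (S : Set V) : Prop :=
  S.Pairwise fun u v => Disjoint (closedNbr G u) (closedNbr G v)

/-- The packing number. -/
noncomputable def packingNumber {V : Type*} (G : SimpleGraph V) [Fintype V] : ℕ :=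
  sSup {n | ∃ S : Set V, IsPacking G S ∧ S.ncard = n}

lemma krdf_mono {V : Type*} [Fintype V] {G H : SimpleGraph V} (hsub : H ≤ G)
    {k : ℕ} {f : V → ℕ} (hf : IsKRDF H k f) : IsKRDF G k f := by
  classical
  refine ⟨hf.1, fun v hv => ?_⟩
  have h2 := hf.2 v hv
  have hsplit : (univ.filter (fun u => G.Adj v u)) =
      (univ.filter (fun u => H.Adj v u)) ∪
      (univ.filter (fun u => G.Adj v u ∧ ¬ H.Adj v u)) := by
    ext u
    simp only [mem_filter, mem_union, mem_univ, true_and]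
    constructor
    · intro hg; by_cases hH : H.Adj v u
      · exact Or.inl hH
      · exact Or.inr ⟨hg, hH⟩
    · rintro (h | ⟨h, _⟩)
      · exact hsub h
      · exact h
  have hdisj : Disjoint (univ.filter (fun u => H.Adj v u))
      (univ.filter (fun u => G.Adj v u ∧ ¬ H.Adj v u)) := by
    simp only [Finset.disjoint_left, mem_filter]
    rintro u ⟨_, h1⟩ ⟨_, _, h2⟩
    exact h2 h1
  have hsum : ∑ u ∈ univ.filter (fun u => G.Adj v u), f u =
      ∑ u ∈ univ.filter (fun u => H.Adj v u), f u +
      ∑ u ∈ univ.filter (fun u => G.Adj v u ∧ ¬ H.Adj v u), f u := by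
    rw [hsplit, Finset.sum_union hdisj]
  -- split the card similarly
  have hcsplit : (univ.filter (fun u => G.Adj v u ∧ 0 < f u)) =
      (univ.filter (fun u => H.Adj v u ∧ 0 < f u)) ∪
      (univ.filter (fun u => (G.Adj v u ∧ ¬ H.Adj v u) ∧ 0 < f u)) := by
    ext u
    simp only [mem_filter, mem_union, mem_univ, true_and]
    constructor
    · rintro ⟨hg, hp⟩
      by_cases hH : H.Adj v u
      · exact Or.inl ⟨hH, hp⟩
      · exact Or.inr ⟨⟨hg, hH⟩, hp⟩
    · rintro (⟨h, hp⟩ | ⟨⟨h, _⟩, hp⟩)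
      · exact ⟨hsub h, hp⟩
      · exact ⟨h, hp⟩
  have hcdisj : Disjoint (univ.filter (fun u => H.Adj v u ∧ 0 < f u))
      (univ.filter (fun u => (G.Adj v u ∧ ¬ H.Adj v u) ∧ 0 < f u)) := by
    simp only [Finset.disjoint_left, mem_filter]
    rintro u ⟨_, h1, _⟩ ⟨_, ⟨_, h2⟩, _⟩
    exact h2 h1
  have hcard : (univ.filter (fun u => G.Adj v u ∧ 0 < f u)).card =
      (univ.filter (fun u => H.Adj v u ∧ 0 < f u)).card +
      (univ.filter (fun u => (G.Adj v u ∧ ¬ H.Adj v u) ∧ 0 < f u)).card := by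
    rw [hcsplit, Finset.card_union_of_disjoint hcdisj]
  -- extra sum ≥ extra card
  have hextra : (univ.filter (fun u => (G.Adj v u ∧ ¬ H.Adj v u) ∧ 0 < f u)).card ≤
      ∑ u ∈ univ.filter (fun u => G.Adj v u ∧ ¬ H.Adj v u), f u := by
    calc (univ.filter (fun u => (G.Adj v u ∧ ¬ H.Adj v u) ∧ 0 < f u)).card
        = ∑ u ∈ univ.filter (fun u => (G.Adj v u ∧ ¬ H.Adj v u) ∧ 0 < f u), 1 := by
          simp
      _ ≤ ∑ u ∈ univ.filter (fun u => (G.Adj v u ∧ ¬ H.Adj v u) ∧ 0 < f u), f u := by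
          apply Finset.sum_le_sum
          intro u hu
          simp only [mem_filter] at hu
          exact hu.2.2
      _ ≤ ∑ u ∈ univ.filter (fun u => G.Adj v u ∧ ¬ H.Adj v u), f u := by
          apply Finset.sum_le_sum_of_subset
          intro u hu
          simp only [mem_filter] at hu ⊢
          exact ⟨hu.1, hu.2.1⟩
  rw [hsum, hcard]
  omega

theorem stmt9 {V : Type*} [Fintype V] (G H : SimpleGraph V) (hsub : H ≤ G)
    (k : ℕ) (hk : 1 ≤ k) :
    kRoman G k ≤ kRoman H k := by
  classical
  have hne : {w | ∃ f : V → ℕ, IsKRDF H k f ∧ ∑ v, f v = w}.Nonempty := by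
    refine ⟨∑ _v : V, (k+1), fun _ => k+1, ⟨fun v => le_rfl, fun v hv => ?_⟩, rfl⟩
    simp only [] at hv; omega
  obtain ⟨f, hf, hsum⟩ := Nat.sInf_mem hne
  exact Nat.sInf_le ⟨f, krdf_mono hsub hf, hsum⟩
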